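/- Let Γ be the positively oriented circle of center c ∈ ℝ and radius r > 0 with |σ_i² − c| ≠ r for all i, and assume additionally σ_i > 0 for every i with |σ_i² − c| < r. Define S_k := (1/(2πi)) ∮_Γ z^k (zI − AᵀA)^{−1} V_in dz for k = 0, …, M−1 and S := [S_0, S_1, …, S_{M−1}] ∈ ℂ^{n×LM}. Let t be the number of indices i with |σ_i² − c| < r. If rank(S) = t, then the column space of AS equals span{u_i : |σ_i² − c| < r}. -/

import Mathlib

open Matrix

lemma circleIntegral_finset_sum {ι : Type*} (s : Finset ι) (f : ι → ℂ → ℂ) (c : ℂ) (R : ℝ)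
    (hf : ∀ i ∈ s, CircleIntegrable (f i) c R) :
    (∮ z in C(c, R), ∑ i ∈ s, f i z) = ∑ i ∈ s, ∮ z in C(c, R), f i z := by
  unfold circleIntegral
  rw [← intervalIntegral.integral_finset_sum (fun i hi => (hf i hi).out)]
  simp only [deriv_circleMap, smul_eq_mul]
  congr 1; funext θ; rw [Finset.mul_sum]

lemma circ_pow_inv_mem {c a : ℂ} {R : ℝ} (k : ℕ) (ha : a ∈ Metric.ball c R) :
    (∮ z in C(c, R), z ^ k * (z - a)⁻¹) = 2 * Real.pi * Complex.I * a ^ k := by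
  have hd : DiffContOnCl ℂ (fun z : ℂ => z ^ k) (Metric.ball c R) :=
    (differentiable_pow k).diffContOnCl
  have h := hd.circleIntegral_sub_inv_smul ha
  rw [show (∮ z in C(c, R), z ^ k * (z - a)⁻¹) = ∮ z in C(c, R), (z - a)⁻¹ • z ^ k by
        congr 1; funext z; simp [smul_eq_mul, mul_comm], h]
  simp [smul_eq_mul]

lemma circ_pow_inv_notMem {c a : ℂ} {R : ℝ} (hR : 0 ≤ R) (k : ℕ)
    (ha : a ∉ Metric.closedBall c R) :
    (∮ z in C(c, R), z ^ k * (z - a)⁻¹) = 0 := by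
  refine Complex.circleIntegral_eq_zero_of_differentiable_on_off_countable hR
      Set.countable_empty ?_ ?_
  · refine (continuous_pow k).continuousOn.mul (ContinuousOn.inv₀ (by fun_prop) ?_)
    exact fun z hz => sub_ne_zero.2 (fun h => ha (h ▸ hz))
  · intro z hz
    have hza : z ≠ a := fun h => ha (h ▸ Metric.ball_subset_closedBall hz.1)
    exact (differentiableAt_pow k).mul
      (((differentiableAt_id.sub_const a).inv (sub_ne_zero.2 hza)))

/-- If `rank S = t`, where `S = [S₀, …, S_{M−1}]` is built from
contour integrals `S_k = (1/(2πi)) ∮_Γ z^k (zI − AᵀA)⁻¹ V_in dz` over the circle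
`Γ = {z : |z − c| = r}` and `t` is the number of indices with `|σᵢ² − c| < r`
(all such `σᵢ > 0`), then the column space of `AS` equals the span of the
corresponding left singular vectors `uᵢ`. -/
theorem stmt_3 {m n L M : ℕ} (hmn : n ≤ m) (hL : 0 < L) (hM : 0 < M)
    (U : Matrix (Fin m) (Fin n) ℝ) (V : Matrix (Fin n) (Fin n) ℝ) (σ : Fin n → ℝ)
    (hU : Uᵀ * U = 1) (hV : Vᵀ * V = 1) (hσ : ∀ i, 0 ≤ σ i)
    (A : Matrix (Fin m) (Fin n) ℝ) (hA : A = U * Matrix.diagonal σ * Vᵀ)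
    (Vin : Matrix (Fin n) (Fin L) ℝ)
    (c r : ℝ) (hr : 0 < r)
    (hnot : ∀ i, |σ i ^ 2 - c| ≠ r)
    (hpos : ∀ i, |σ i ^ 2 - c| < r → 0 < σ i)
    (S : Matrix (Fin n) (Fin M × Fin L) ℂ)
    (hS : ∀ (k : Fin M) (i : Fin n) (j : Fin L),
      S i (k, j) = (2 * (Real.pi : ℂ) * Complex.I)⁻¹ *
        ∮ z in C((c : ℂ), r), z ^ (k : ℕ) *
          (((z • (1 : Matrix (Fin n) (Fin n) ℂ) - (Aᵀ * A).map Complex.ofReal)⁻¹ *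
            Vin.map Complex.ofReal) i j))
    (hrank : S.rank = Fintype.card {i : Fin n // |σ i ^ 2 - c| < r}) :
    Submodule.span ℂ (Set.range (A.map Complex.ofReal * S)ᵀ) =
      Submodule.span ℂ
        {x : Fin m → ℂ | ∃ i, |σ i ^ 2 - c| < r ∧ x = fun a => ((U a i : ℝ) : ℂ)} := by
  set Vc : Matrix (Fin n) (Fin n) ℂ := V.map Complex.ofReal with hVcdef
  set Uc : Matrix (Fin m) (Fin n) ℂ := U.map Complex.ofReal with hUcdef
  set Ac : Matrix (Fin m) (Fin n) ℂ := A.map Complex.ofReal with hAcdef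
  set Wc : Matrix (Fin n) (Fin L) ℂ := Vcᵀ * Vin.map Complex.ofReal with hWcdef
  set w : Fin n → ℂ := fun p => ((σ p : ℂ)) ^ 2 with hwdef
  -- complexification is multiplicative
  have hmapmul : ∀ {k l o : ℕ} (X : Matrix (Fin k) (Fin l) ℝ) (Y : Matrix (Fin l) (Fin o) ℝ),
      (X * Y).map Complex.ofReal = X.map Complex.ofReal * Y.map Complex.ofReal := by
    intro k l o X Y
    ext i j
    simp [Matrix.mul_apply, Matrix.map_apply]
  have hmap_one : (1 : Matrix (Fin n) (Fin n) ℝ).map Complex.ofReal = 1 := by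
    ext i j; by_cases h : i = j <;> simp [Matrix.one_apply, h]
  have h1 : Vcᵀ * Vc = 1 := by
    rw [hVcdef, ← Matrix.transpose_map, ← hmapmul, hV, hmap_one]
  have h2 : Vc * Vcᵀ = 1 := mul_eq_one_comm.mp h1
  -- AᵀA = V diag(σ²) Vᵀ over ℝ
  have hsq : (fun p => σ p * σ p) = fun p => σ p ^ 2 := by funext p; ring
  have hATA_real : Aᵀ * A = V * Matrix.diagonal (fun p => σ p ^ 2) * Vᵀ := by
    rw [hA]
    calc (U * Matrix.diagonal σ * Vᵀ)ᵀ * (U * Matrix.diagonal σ * Vᵀ)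
        = V * (Matrix.diagonal σ * ((Uᵀ * U) * (Matrix.diagonal σ * Vᵀ))) := by
          simp only [Matrix.transpose_mul, Matrix.transpose_transpose,
            Matrix.diagonal_transpose, Matrix.mul_assoc]
      _ = V * Matrix.diagonal (fun p => σ p ^ 2) * Vᵀ := by
          rw [hU, Matrix.one_mul, ← Matrix.mul_assoc (Matrix.diagonal σ),
            Matrix.diagonal_mul_diagonal, hsq, Matrix.mul_assoc]
  have hdiagmap : (Matrix.diagonal (fun p => σ p ^ 2)).map Complex.ofReal
      = Matrix.diagonal w := by
    rw [Matrix.diagonal_map (by simp)]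
    congr 1
    funext p
    simp [hwdef]
  have hATA : (Aᵀ * A).map Complex.ofReal = Vc * Matrix.diagonal w * Vcᵀ := by
    rw [hATA_real, hmapmul, hmapmul, hdiagmap, hVcdef, Matrix.transpose_map]
  -- A V = U diag(σ)
  have hAV : Ac * Vc = Uc * Matrix.diagonal (fun p => (σ p : ℂ)) := by
    have hre : A * V = U * Matrix.diagonal σ := by
      rw [hA, Matrix.mul_assoc, Matrix.mul_assoc, hV, Matrix.mul_one]
    have := congrArg (fun X : Matrix (Fin m) (Fin n) ℝ => X.map Complex.ofReal) hre
    simp only [hmapmul] at this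
    rw [hAcdef, hVcdef, hUcdef, this, Matrix.diagonal_map (by simp)]
  -- the resolvent on the circle
  have hzsub : ∀ z ∈ Metric.sphere (c : ℂ) r, ∀ p, z - w p ≠ 0 := by
    intro z hz p h
    have hzw : z = w p := sub_eq_zero.mp h
    apply hnot p
    have hd : dist z (c : ℂ) = r := hz
    rw [hzw] at hd
    have hwc : w p - (c : ℂ) = ((σ p ^ 2 - c : ℝ) : ℂ) := by push_cast [hwdef]; ring
    rw [Complex.dist_eq, hwc, Complex.norm_real, Real.norm_eq_abs] at hd
    exact hd
  have hcancel : ∀ X : Matrix (Fin n) (Fin n) ℂ, Vcᵀ * (Vc * X) = X := by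
    intro X; rw [← Matrix.mul_assoc, h1, Matrix.one_mul]
  have hinv : ∀ z ∈ Metric.sphere (c : ℂ) r,
      (z • (1 : Matrix (Fin n) (Fin n) ℂ) - (Aᵀ * A).map Complex.ofReal)⁻¹
        = Vc * Matrix.diagonal (fun p => (z - w p)⁻¹) * Vcᵀ := by
    intro z hz
    have hne := hzsub z hz
    have hDz : Vc * Matrix.diagonal (fun p => z - w p) * Vcᵀ
        = z • (1 : Matrix (Fin n) (Fin n) ℂ) - (Aᵀ * A).map Complex.ofReal := by
      have hd : Matrix.diagonal (fun p => z - w p)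
          = z • (1 : Matrix (Fin n) (Fin n) ℂ) - Matrix.diagonal w := by
        ext i j
        by_cases h : i = j <;> simp [Matrix.diagonal_apply, Matrix.one_apply, h]
      rw [hd, Matrix.mul_sub, Matrix.sub_mul, hATA, Matrix.mul_smul, Matrix.mul_one,
        Matrix.smul_mul, h2]
    rw [← hDz]
    apply Matrix.inv_eq_right_inv
    have hDE : Matrix.diagonal (fun p => z - w p) * Matrix.diagonal (fun p => (z - w p)⁻¹)
        = 1 := by
      rw [Matrix.diagonal_mul_diagonal]
      rw [show (fun p => (z - w p) * (z - w p)⁻¹) = fun _ => (1 : ℂ) from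
        funext fun p => mul_inv_cancel₀ (hne p), Matrix.diagonal_one]
    calc (Vc * Matrix.diagonal (fun p => z - w p) * Vcᵀ)
          * (Vc * Matrix.diagonal (fun p => (z - w p)⁻¹) * Vcᵀ)
        = Vc * (Matrix.diagonal (fun p => z - w p)
            * (Vcᵀ * (Vc * (Matrix.diagonal (fun p => (z - w p)⁻¹) * Vcᵀ)))) := by
          simp only [Matrix.mul_assoc]
      _ = Vc * (Matrix.diagonal (fun p => z - w p)
            * (Matrix.diagonal (fun p => (z - w p)⁻¹) * Vcᵀ)) := by rw [hcancel]
      _ = 1 := by rw [← Matrix.mul_assoc (Matrix.diagonal _), hDE, Matrix.one_mul, h2]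
  -- entrywise formula for the integrand
  have hentry : ∀ z ∈ Metric.sphere (c : ℂ) r, ∀ (k : ℕ) (i : Fin n) (j : Fin L),
      z ^ k * (((z • (1 : Matrix (Fin n) (Fin n) ℂ) - (Aᵀ * A).map Complex.ofReal)⁻¹ *
          Vin.map Complex.ofReal) i j)
        = ∑ p, (Vc i p * Wc p j) * (z ^ k * (z - w p)⁻¹) := by
    intro z hz k i j
    rw [hinv z hz, Matrix.mul_assoc, Matrix.mul_assoc, Matrix.mul_apply, Finset.mul_sum]
    refine Finset.sum_congr rfl fun p _ => ?_
    rw [Matrix.diagonal_mul]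
    ring
  -- the matrix P
  set P : Matrix (Fin n) (Fin M × Fin L) ℂ :=
    fun p q => if |σ p ^ 2 - c| < r then w p ^ (q.1 : ℕ) * Wc p q.2 else 0 with hPdef
  have hπ : (2 * (Real.pi : ℂ) * Complex.I) ≠ 0 := by
    simp [Real.pi_ne_zero, Complex.I_ne_zero]
  have hScol : S = Vc * P := by
    ext i q
    obtain ⟨k, j⟩ := q
    rw [hS k i j]
    have hint : ∀ p : Fin n, p ∈ (Finset.univ : Finset (Fin n)) →
        CircleIntegrable (fun z => (Vc i p * Wc p j) * (z ^ (k : ℕ) * (z - w p)⁻¹)) (c : ℂ) r := by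
      intro p _
      refine ContinuousOn.circleIntegrable hr.le ?_
      refine continuousOn_const.mul ((continuous_pow _).continuousOn.mul
        (ContinuousOn.inv₀ (by fun_prop) fun z hz => hzsub z hz p))
    have hcong : (∮ z in C((c : ℂ), r), z ^ (k : ℕ) *
          (((z • (1 : Matrix (Fin n) (Fin n) ℂ) - (Aᵀ * A).map Complex.ofReal)⁻¹ *
            Vin.map Complex.ofReal) i j))
        = ∮ z in C((c : ℂ), r), ∑ p, (Vc i p * Wc p j) * (z ^ (k : ℕ) * (z - w p)⁻¹) :=
      circleIntegral.integral_congr hr.le (fun z hz => hentry z hz (k : ℕ) i j)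
    rw [hcong, circleIntegral_finset_sum _ _ _ _ hint]
    simp only [circleIntegral.integral_const_mul]
    rw [Finset.mul_sum, Matrix.mul_apply]
    refine Finset.sum_congr rfl fun p _ => ?_
    by_cases hp : |σ p ^ 2 - c| < r
    · have hwc : w p - (c : ℂ) = ((σ p ^ 2 - c : ℝ) : ℂ) := by push_cast [hwdef]; ring
      have hmem : w p ∈ Metric.ball (c : ℂ) r := by
        rw [Metric.mem_ball, Complex.dist_eq, hwc, Complex.norm_real, Real.norm_eq_abs]
        exact hp
      rw [circ_pow_inv_mem (k : ℕ) hmem]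
      simp only [hPdef, if_pos hp]
      field_simp
    · have hgt : r < |σ p ^ 2 - c| := lt_of_le_of_ne (not_lt.mp hp) (Ne.symm (hnot p))
      have hwc : w p - (c : ℂ) = ((σ p ^ 2 - c : ℝ) : ℂ) := by push_cast [hwdef]; ring
      have hnm : w p ∉ Metric.closedBall (c : ℂ) r := by
        rw [Metric.mem_closedBall, Complex.dist_eq, hwc, Complex.norm_real, Real.norm_eq_abs]
        exact not_le.mpr hgt
      rw [circ_pow_inv_notMem hr.le (k : ℕ) hnm]
      simp [hPdef, hp]
  -- linear algebra
  set b : {i : Fin n // |σ i ^ 2 - c| < r} → (Fin n → ℂ) :=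
    (fun i : Fin n => Vcᵀ i) ∘ (Subtype.val) with hbdef
  set WV : Submodule ℂ (Fin n → ℂ) := Submodule.span ℂ (Set.range b) with hWVdef
  have hle : Submodule.span ℂ (Set.range Sᵀ) ≤ WV := by
    refine Submodule.span_le.2 ?_
    rintro x ⟨q, rfl⟩
    have hcolsum : Sᵀ q = ∑ p : Fin n, P p q • Vcᵀ p := by
      funext i
      simp only [hScol, Matrix.transpose_apply, Matrix.mul_apply, Finset.sum_apply,
        Pi.smul_apply, smul_eq_mul]
      exact Finset.sum_congr rfl fun p _ => mul_comm _ _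
    rw [hcolsum]
    refine Submodule.sum_mem _ fun p _ => ?_
    by_cases hp : |σ p ^ 2 - c| < r
    · exact Submodule.smul_mem _ _ (Submodule.subset_span ⟨⟨p, hp⟩, rfl⟩)
    · have hz : P p q = 0 := by simp [hPdef, hp]
      rw [hz, zero_smul]
      exact Submodule.zero_mem _
  have hVinvert := invertibleOfRightInverse Vcᵀ Vc h1
  have hVunit : IsUnit Vcᵀ := @isUnit_of_invertible _ _ _ hVinvert
  have hli : LinearIndependent ℂ b :=
    (Matrix.linearIndependent_rows_iff_isUnit.2 hVunit).comp _ Subtype.val_injective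
  have hfinW : Module.finrank ℂ WV = Fintype.card {i : Fin n // |σ i ^ 2 - c| < r} :=
    finrank_span_eq_card hli
  rw [Matrix.rank, Matrix.range_mulVecLin] at hrank
  have hspanS : Submodule.span ℂ (Set.range Sᵀ) = WV :=
    Submodule.eq_of_le_of_finrank_le hle (by rw [hfinW, ← hrank]; exact le_rfl)
  -- columns of A S
  have hcol : (Ac * S)ᵀ = fun q => Ac.mulVecLin (Sᵀ q) := by
    funext q x
    simp [Matrix.transpose_apply, Matrix.mul_apply, Matrix.mulVecLin_apply, Matrix.mulVec,
      dotProduct, mul_comm]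
  have hrange : Set.range (Ac * S)ᵀ = Ac.mulVecLin '' Set.range Sᵀ := by
    rw [hcol]; exact Set.range_comp _ _
  rw [hrange, Submodule.span_image, hspanS, hWVdef, ← Submodule.span_image]
  -- A vᵢ = σᵢ uᵢ
  have hAcolv : ∀ p : Fin n,
      Ac.mulVecLin (Vcᵀ p) = (σ p : ℂ) • (fun x : Fin m => ((U x p : ℝ) : ℂ)) := by
    intro p
    funext x
    have h3 : (Ac * Vc) x p = Uc x p * (σ p : ℂ) := by rw [hAV, Matrix.mul_diagonal]
    calc Ac.mulVecLin (Vcᵀ p) x = (Ac * Vc) x p := by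
          simp [Matrix.mulVecLin_apply, Matrix.mulVec, dotProduct, Matrix.mul_apply,
            Matrix.transpose_apply]
      _ = (σ p : ℂ) • (fun x : Fin m => ((U x p : ℝ) : ℂ)) x := by
          rw [h3]
          simp [hUcdef, Matrix.map_apply, smul_eq_mul, mul_comm]
  apply le_antisymm
  · rw [Submodule.span_le]
    rintro x ⟨y, ⟨p, rfl⟩, rfl⟩
    rw [hbdef]
    simp only [Function.comp_apply]
    rw [hAcolv]
    exact Submodule.smul_mem _ _ (Submodule.subset_span ⟨p.1, p.2, rfl⟩)
  · rw [Submodule.span_le]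
    rintro x ⟨i, hi, rfl⟩
    have hσ : ((σ i : ℝ) : ℂ) ≠ 0 := by exact_mod_cast (hpos i hi).ne'
    have hx : (fun a : Fin m => ((U a i : ℝ) : ℂ))
        = ((σ i : ℂ))⁻¹ • (Ac.mulVecLin (Vcᵀ i)) := by
      rw [hAcolv, inv_smul_smul₀ hσ]
    rw [hx]
    exact Submodule.smul_mem _ _
      (Submodule.subset_span ⟨Vcᵀ i, ⟨⟨i, hi⟩, rfl⟩, rfl⟩)
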